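/- arXiv:1710.01130 — 6 statements merged into one kernel-verified Lean document; each statement's English description precedes it below -/
import Mathlib

section
/- Integers x and y with x ≠ 0 and y ≠ 0 satisfy x³ + y³ + x² + y² + 1 = xyz for some integer z if and only if x divides y³ + y² + 1 and y divides x³ + x² + 1. -/
theorem stmt_2 (x y : ℤ) (hx : x ≠ 0) (hy : y ≠ 0) :
    (∃ z : ℤ, x^3 + y^3 + x^2 + y^2 + 1 = x * y * z) ↔
      (x ∣ y^3 + y^2 + 1 ∧ y ∣ x^3 + x^2 + 1) := by
  constructor
  · rintro ⟨z, hz⟩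
    constructor
    · exact ⟨y*z - x^2 - x, by linarith [hz]⟩
    · exact ⟨x*z - y^2 - y, by ring_nf; ring_nf at hz; linarith⟩
  · rintro ⟨⟨a, ha⟩, ⟨b, hb⟩⟩
    have hcop : IsCoprime x y := ⟨a, -(y^2+y), by linarith [ha]⟩
    have hdx : x ∣ x^3 + y^3 + x^2 + y^2 + 1 := ⟨x^2 + x + a, by linarith [ha]⟩
    have hdy : y ∣ x^3 + y^3 + x^2 + y^2 + 1 := ⟨y^2 + y + b, by linarith [hb]⟩
    obtain ⟨z, hz⟩ := hcop.mul_dvd hdx hdy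
    exact ⟨z, hz⟩
end

section
/- Suppose integers x₀, y₀ satisfy x₀ | y₀³ + y₀ + 1 and y₀ | x₀³ + x₀ + 1, and let y₋₁ be the integer with y₋₁·y₀ = x₀³ + x₀ + 1. Then x₀ | y₋₁³ + y₋₁² + 1 and y₋₁ | x₀³ + x₀ + 1; that is, (y₋₁, x₀) is a solution to the system S_{1,2}. -/
theorem stmt_5 (x₀ y₀ ym : ℤ) (hx : x₀ ≠ 0) (hy : y₀ ≠ 0)
    (h1 : x₀ ∣ y₀^3 + y₀ + 1) (h2 : y₀ ∣ x₀^3 + x₀ + 1)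
    (hym : ym * y₀ = x₀^3 + x₀ + 1) :
    x₀ ∣ ym^3 + ym^2 + 1 ∧ ym ∣ x₀^3 + x₀ + 1 := by
  have hk : ym * y₀ = 1 + x₀ * (x₀^2 + 1) := by linarith [hym]
  set k : ℤ := x₀^2 + 1 with hkdef
  have hcop : IsCoprime x₀ y₀ := ⟨-k, ym, by linarith⟩
  obtain ⟨m, hm⟩ := h1
  have hdvd : x₀ ∣ y₀^3 * (ym^3 + ym^2 + 1) := by
    refine ⟨m + 3*k + 3*x₀*k^2 + x₀^2*k^3 + 2*y₀*k + x₀*y₀*k^2, ?_⟩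
    linear_combination ((ym*y₀)^2 + (ym*y₀)*(1+x₀*k) + (1+x₀*k)^2 + y₀*(ym*y₀ + 1 + x₀*k)) * hk + hm
  refine ⟨(hcop.pow_right (n := 3)).dvd_of_dvd_mul_left hdvd, ⟨y₀, hym.symm⟩⟩
end

section
/- Suppose integers x₀, y₀ satisfy x₀ | y₀³ + y₀² + 1 and y₀ | x₀³ + x₀ + 1, and let x₁ be the integer with x₀·x₁ = y₀³ + y₀² + 1. Then x₁ | y₀³ + y₀² + 1 and y₀ | x₁³ + x₁² + 1; that is, (y₀, x₁) is a solution to S_{2,2}. -/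
theorem stmt_6 (x₀ y₀ x₁ : ℤ) (hx : x₀ ≠ 0) (hy : y₀ ≠ 0)
    (h1 : x₀ ∣ y₀^3 + y₀^2 + 1) (h2 : y₀ ∣ x₀^3 + x₀ + 1)
    (hx1 : x₀ * x₁ = y₀^3 + y₀^2 + 1) :
    x₁ ∣ y₀^3 + y₀^2 + 1 ∧ y₀ ∣ x₁^3 + x₁^2 + 1 := by
  constructor
  · exact ⟨x₀, by linarith [hx1]⟩
  · have ha : x₀ * x₁ - 1 = y₀ * (y₀^2 + y₀) := by rw [hx1]; ring
    obtain ⟨b, hb⟩ := h2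
    have key : y₀ ∣ x₀^3 * (x₁^3 + x₁^2 + 1) := by
      refine ⟨(y₀^2 + y₀) * ((x₀*x₁)^2 + x₀*x₁ + 1 + x₀*(x₀*x₁+1)) + b, ?_⟩
      linear_combination ((x₀*x₁)^2 + x₀*x₁ + 1 + x₀*(x₀*x₁+1)) * ha + hb
    have hcop : IsCoprime y₀ x₀ := ⟨-(y₀^2 + y₀), x₁, by linarith [ha]⟩
    exact (hcop.pow_right).dvd_of_dvd_mul_left key
end

section
/- Suppose integers x₀, y₀ satisfy x₀ | y₀³ + y₀² + 1 and y₀ | x₀³ + x₀² + 1, and let x₁ be the integer with x₀·x₁ = y₀³ + y₀² + 1. Then x₁ | y₀³ + y₀² + 1 and y₀ | x₁³ + x₁ + 1; that is, (y₀, x₁) is a solution to S_{1,2}. -/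
theorem stmt_7 (x₀ y₀ x₁ : ℤ) (hx : x₀ ≠ 0) (hy : y₀ ≠ 0)
    (h1 : x₀ ∣ y₀^3 + y₀^2 + 1) (h2 : y₀ ∣ x₀^3 + x₀^2 + 1)
    (hx1 : x₀ * x₁ = y₀^3 + y₀^2 + 1) :
    x₁ ∣ y₀^3 + y₀^2 + 1 ∧ y₀ ∣ x₁^3 + x₁ + 1 := by
  constructor
  · exact ⟨x₀, by linarith [hx1, mul_comm x₀ x₁]⟩
  · have hd : y₀ ∣ x₀ * x₁ - 1 := ⟨y₀^2 + y₀, by linear_combination hx1⟩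
    have key : x₁^3 + x₁ + 1 =
        x₁^3 * (x₀^3 + x₀^2 + 1) -
        (x₀*x₁ - 1) * ((x₀*x₁)^2 + x₀*x₁ + 1 + x₁*(x₀*x₁ + 1)) := by ring
    rw [key]
    exact dvd_sub (h2.mul_left _) (hd.mul_right _)
end

section
/- If a sequence of integers u : ℤ → ℤ satisfies u(n-1)·u(n+1) = u(n)³ + u(n)^{f(n)} + 1 for all n, where f(n) = 1 if n ≡ 0 or 3 (mod 4) and f(n) = 2 if n ≡ 1 or 2 (mod 4), then no term u(n) is divisible by 2, 5, or 7. -/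
lemma stmt_13_key (u : ℤ → ℤ)
    (h : ∀ n : ℤ, u (n-1) * u (n+1)
        = u n ^ 3 + u n ^ (if n % 4 = 0 ∨ n % 4 = 3 then 1 else 2) + 1)
    (p : ℕ) (hp : ∀ t : ZMod p, t^3 + t + 1 ≠ 0 ∧ t^3 + t^2 + 1 ≠ 0)
    (n : ℤ) : ¬ ((p : ℤ) ∣ u n) := by
  intro hd
  have h2 := h (n+1)
  have hs : (n+1) - 1 = n := by ring
  rw [hs] at h2
  set e := (if (n+1) % 4 = 0 ∨ (n+1) % 4 = 3 then 1 else 2) with he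
  have hdvd : (p : ℤ) ∣ u (n+1) ^ 3 + u (n+1) ^ e + 1 := by
    rw [← h2]; exact hd.mul_right _
  have hz : ((u (n+1) : ZMod p)) ^ 3 + (u (n+1) : ZMod p) ^ e + 1 = 0 := by
    have := (ZMod.intCast_zmod_eq_zero_iff_dvd _ p).mpr hdvd
    push_cast at this
    exact this
  have he12 : e = 1 ∨ e = 2 := by
    rw [he]; split <;> simp
  rcases he12 with h1 | h1 <;> rw [h1] at hz
  · exact (hp (u (n+1) : ZMod p)).1 (by rw [← hz]; ring)
  · exact (hp (u (n+1) : ZMod p)).2 hz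

theorem stmt_13 (u : ℤ → ℤ)
    (h : ∀ n : ℤ, u (n-1) * u (n+1)
        = u n ^ 3 + u n ^ (if n % 4 = 0 ∨ n % 4 = 3 then 1 else 2) + 1) :
    ∀ n : ℤ, ¬ (2 ∣ u n) ∧ ¬ (5 ∣ u n) ∧ ¬ (7 ∣ u n) := by
  intro n
  refine ⟨?_, ?_, ?_⟩
  · exact_mod_cast stmt_13_key u h 2 (by decide) n
  · exact_mod_cast stmt_13_key u h 5 (by decide) n
  · exact_mod_cast stmt_13_key u h 7 (by decide) n
end

section
/- Let p be a prime and u, v, w integers with p not dividing u - v, p not dividing w. Suppose: u³ + u + 1 ≡ 0 (mod p), v³ + v + 1 ≡ 0 (mod p), (vw)³ + (vw)² + 1 ≡ 0 (mod p), and (uw)³ + (uw)² + 1 ≡ 0 (mod p). Then (-w)³ + (-w) + 1 ≡ 0 (mod p), i.e. p divides w³ + w - 1. -/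
theorem stmt_19 (p : ℕ) (hp : p.Prime) (u v w : ℤ)
    (h1 : ¬ ((p : ℤ) ∣ u - v)) (h2 : ¬ ((p : ℤ) ∣ w))
    (hu : (p : ℤ) ∣ u^3 + u + 1) (hv : (p : ℤ) ∣ v^3 + v + 1)
    (hvw : (p : ℤ) ∣ (v*w)^3 + (v*w)^2 + 1)
    (huw : (p : ℤ) ∣ (u*w)^3 + (u*w)^2 + 1) :
    (p : ℤ) ∣ (-w)^3 + (-w) + 1 := by
  haveI := Fact.mk hp
  rw [← ZMod.intCast_zmod_eq_zero_iff_dvd] at hu hv hvw huw ⊢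
  rw [← ZMod.intCast_zmod_eq_zero_iff_dvd] at h1 h2
  push_cast at hu hv hvw huw h1 h2 ⊢
  set a := (u : ZMod p) with ha
  set b := (v : ZMod p) with hb
  set c := (w : ZMod p) with hcw
  have h1' : a - b ≠ 0 := h1
  have h2' : c ≠ 0 := fun h => h2 (by rw [h])
  have S : a^2 + a*b + b^2 + 1 = 0 := by
    have h : (a - b) * (a^2 + a*b + b^2 + 1) = 0 := by linear_combination hu - hv
    rcases mul_eq_zero.1 h with h | h
    · exact absurd h h1'
    · exact h
  have hab : a + b = c := by
    have h : (a - b) * c^2 * (a + b - c) = 0 := by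
      linear_combination huw - hvw - (a - b) * c^3 * S
    rcases mul_eq_zero.1 h with h | h
    · rcases mul_eq_zero.1 h with h | h
      · exact absurd h h1'
      · exact absurd (pow_eq_zero_iff (by norm_num) |>.1 h) h2'
    · linear_combination h
  have hab2 : a * b = c^2 + 1 := by linear_combination (a + b + c) * hab - S
  have haq : a^2 = c*a - c^2 - 1 := by linear_combination a * hab - hab2
  have key : (c + 1) * (c^3 + c - 1) = 0 := by
    linear_combination c^3 * hu + c^2 * haq - huw
  rcases mul_eq_zero.1 key with hc | h
  · -- c = -1, derive char 3
    have hc' : c = -1 := by linear_combination hc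
    rw [hc'] at haq
    have ha2 : a^2 = -a - 2 := by linear_combination haq
    have h3 : (3 : ZMod p) = 0 := by linear_combination hu - a * ha2 + ha2
    linear_combination h3 - (c^2 - c + 2) * hc
  · linear_combination -h
end
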